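/- arXiv:1308.5628 — 4 statements merged into one kernel-verified Lean document; each statement's English description precedes it below -/
import Mathlib

section
/- Let k be an algebraically closed field of characteristic 0. There exists an elementary abelian 2-subgroup of rank exactly 6 (i.e., a subgroup isomorphic to (ℤ/2ℤ)^6) inside the Cremona group Cr_3(k), realized as the group of k-algebra automorphisms of the rational function field k(x_1,x_2,x_3); hence the bound r(G) ≤ 6 for elementary abelian 2-subgroups of Cr_3(k) is sharp. -/
open MvPolynomial IsLocalization

set_option linter.unusedSectionVars false

noncomputable section
namespace CremonaAux
variable (k : Type*) [Field k] [CharZero k]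

local notation "R" => MvPolynomial (Fin 3) k
def ff : MvPolynomial (Fin 3) k := X 0 * X 1 * X 2
local notation "A" => Localization.Away (ff k)
local notation "K" => FractionRing (MvPolynomial (Fin 3) k)

theorem ff_ne_zero : ff k ≠ 0 := by
  simp [ff, X_ne_zero, mul_ne_zero]

theorem algR_inj : Function.Injective (algebraMap R K) :=
  IsFractionRing.injective _ _

theorem isUnit_ff_K : IsUnit (algebraMap R K (ff k)) := by
  rw [isUnit_iff_ne_zero]
  intro h
  exact ff_ne_zero k (algR_inj k (by simpa using h))

instance : Algebra A K :=
  (IsLocalization.Away.lift (ff k) (g := algebraMap R K) (isUnit_ff_K k)).toAlgebra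

theorem algAK_algRA (x : R) :
    algebraMap A K (algebraMap R A x) = algebraMap R K x := by
  rw [RingHom.algebraMap_toAlgebra]
  exact IsLocalization.Away.lift_eq (ff k) (isUnit_ff_K k) x

instance : IsScalarTower R A K := ⟨fun x a z => by
  rw [Algebra.smul_def, Algebra.smul_def x a, map_mul, algAK_algRA, Algebra.smul_def a z,
    ← IsScalarTower.algebraMap_smul (FractionRing (MvPolynomial (Fin 3) k)) x
      ((algebraMap A K a) * z), smul_eq_mul, mul_assoc]⟩

instance : IsFractionRing A K :=
  IsFractionRing.isFractionRing_of_isDomain_of_isLocalization (Submonoid.powers (ff k)) A K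

instance : IsScalarTower k A K := ⟨fun x a z => by
  rw [← IsScalarTower.algebraMap_smul (MvPolynomial (Fin 3) k) x a, smul_assoc,
    IsScalarTower.algebraMap_smul]⟩

theorem powers_le : Submonoid.powers (ff k) ≤ nonZeroDivisors R :=
  powers_le_nonZeroDivisors_of_noZeroDivisors (ff_ne_zero k)

instance : IsDomain A :=
  IsLocalization.isDomain_of_le_nonZeroDivisors _ (powers_le k)

theorem algRA_inj : Function.Injective (algebraMap R A) :=
  IsLocalization.injective _ (powers_le k)

theorem algAK_inj : Function.Injective (algebraMap A K) :=
  IsFractionRing.injective _ _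

/-- `X i` divides `ff`. -/
theorem X_dvd_ff : ∀ i : Fin 3, (X i : MvPolynomial (Fin 3) k) ∣ ff k
  | 0 => ⟨X 1 * X 2, by rw [ff]; ring⟩
  | 1 => ⟨X 0 * X 2, by rw [ff]; ring⟩
  | 2 => ⟨X 0 * X 1, by rw [ff]; ring⟩

theorem zmod2_cases : ∀ c : ZMod 2, c = 0 ∨ c = 1 := by decide

theorem isUnit_X_A (i : Fin 3) : IsUnit (algebraMap R A (X i)) := by
  refine isUnit_of_dvd_unit (map_dvd _ (X_dvd_ff k i)) ?_
  exact IsLocalization.map_units A (⟨ff k, Submonoid.mem_powers _⟩ : Submonoid.powers (ff k))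

/-- The image of `X i` as a unit of `A`. -/
def ua (i : Fin 3) : Aˣ := (isUnit_X_A k i).unit

@[simp] theorem ua_coe (i : Fin 3) : ((ua k i : Aˣ) : A) = algebraMap R A (X i) := rfl

/-- sign unit -/
def su (b : ZMod 2) : Aˣ := if b = 0 then 1 else -1

/-- exponent -/
def E (b : ZMod 2) : ℤ := if b = 0 then 1 else -1

theorem E_add : ∀ a b : ZMod 2, E (a + b) = E a * E b := by decide

theorem su_zero : su k 0 = 1 := if_pos rfl
theorem su_one : su k 1 = -1 := if_neg (by decide)
theorem E_zero : E 0 = 1 := if_pos rfl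
theorem E_one : E 1 = -1 := if_neg (by decide)

theorem neg_one_mul_neg_one : (-1 : Aˣ) * -1 = 1 := Units.ext (by simp)

theorem su_add (a b : ZMod 2) : su k (a + b) = su k a * su k b := by
  rcases zmod2_cases a with ha | ha <;> rcases zmod2_cases b with hb | hb
  · rw [ha, hb, add_zero, su_zero, mul_one]
  · rw [ha, hb, zero_add, su_zero, one_mul]
  · rw [ha, hb, add_zero, su_zero, mul_one]
  · rw [ha, hb, show (1 + 1 : ZMod 2) = 0 from by decide, su_zero, su_one]
    exact (neg_one_mul_neg_one k).symm

theorem neg_one_zpow_E (b : ZMod 2) : (-1 : Aˣ) ^ E b = -1 := by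
  have hinv : (-1 : Aˣ)⁻¹ = -1 := inv_eq_of_mul_eq_one_right (neg_one_mul_neg_one k)
  rcases zmod2_cases b with hb | hb
  · rw [hb, E_zero, zpow_one]
  · rw [hb, E_one, zpow_neg_one, hinv]

theorem su_zpow_E (a b : ZMod 2) : su k a ^ E b = su k a := by
  rcases zmod2_cases a with ha | ha
  · simp [su, ha]
  · simp only [su, ha, if_neg (by decide : (1 : ZMod 2) ≠ 0)]
    exact neg_one_zpow_E k b

def j0 (i : Fin 3) : Fin 6 := ⟨i.1, by omega⟩
def j1 (i : Fin 3) : Fin 6 := ⟨i.1 + 3, by omega⟩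

/-- The unit of `A` to which `X i` will be sent by the automorphism indexed by `ε`. -/
def vu (ε : Fin 6 → Multiplicative (ZMod 2)) (i : Fin 3) : Aˣ :=
  su k (Multiplicative.toAdd (ε (j0 i))) * ua k i ^ E (Multiplicative.toAdd (ε (j1 i)))

/-- The substitution algebra homomorphism at the polynomial level. -/
def gA (ε : Fin 6 → Multiplicative (ZMod 2)) : MvPolynomial (Fin 3) k →ₐ[k] A :=
  aeval (fun i => ((vu k ε i : Aˣ) : A))

theorem gA_isUnit (ε : Fin 6 → Multiplicative (ZMod 2)) :
    ∀ y : Submonoid.powers (ff k), IsUnit (gA k ε y) := by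
  rintro ⟨y, n, rfl⟩
  simp only [map_pow]
  refine IsUnit.pow n ?_
  have : gA k ε (ff k) = ((vu k ε 0 * vu k ε 1 * vu k ε 2 : Aˣ) : A) := by
    show gA k ε (X 0 * X 1 * X 2) = _
    rw [map_mul, map_mul]
    simp only [gA, aeval_X, Units.val_mul]
  rw [this]
  exact Units.isUnit _

/-- The lifted algebra endomorphism of the Laurent ring `A`. -/
def hA (ε : Fin 6 → Multiplicative (ZMod 2)) : A →ₐ[k] A :=
  IsLocalization.liftAlgHom (M := Submonoid.powers (ff k)) (f := gA k ε) (gA_isUnit k ε)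

theorem hA_algebraMap (ε) (x : R) : hA k ε (algebraMap R A x) = gA k ε x := by
  simp [hA, IsLocalization.liftAlgHom_apply, IsLocalization.lift_eq]

theorem hA_ua (ε) (i : Fin 3) : hA k ε ((ua k i : Aˣ) : A) = ((vu k ε i : Aˣ) : A) := by
  rw [ua_coe, hA_algebraMap]
  simp [gA]

theorem Um_ua (ε) (i : Fin 3) : Units.map (hA k ε : A →* A) (ua k i) = vu k ε i :=
  Units.ext (by simpa using hA_ua k ε i)

theorem Um_su (ε) (b : ZMod 2) : Units.map (hA k ε : A →* A) (su k b) = su k b := by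
  refine Units.ext ?_
  rcases zmod2_cases b with hb | hb <;> simp [su, hb]

theorem Um_vu (ε η) (i : Fin 3) :
    Units.map (hA k ε : A →* A) (vu k η i) = vu k (ε * η) i := by
  rw [vu, map_mul, map_zpow, Um_ua, Um_su, vu, vu, mul_zpow, su_zpow_E, ← zpow_mul,
    Pi.mul_apply, Pi.mul_apply, toAdd_mul, toAdd_mul, su_add, E_add, ← mul_assoc,
    mul_comm (su k (Multiplicative.toAdd (η (j0 i)))) (su k (Multiplicative.toAdd (ε (j0 i))))]

theorem hA_vu (ε η) (i : Fin 3) :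
    hA k ε ((vu k η i : Aˣ) : A) = ((vu k (ε * η) i : Aˣ) : A) := by
  rw [← Um_vu k ε η i]
  rfl

theorem mul_self_eq_one (ε : Fin 6 → Multiplicative (ZMod 2)) : ε * ε = 1 := by
  funext j
  have : ∀ x : Multiplicative (ZMod 2), x * x = 1 := by decide
  exact this (ε j)

theorem vu_one (i : Fin 3) : vu k 1 i = ua k i := by
  have h0 : Multiplicative.toAdd ((1 : Fin 6 → Multiplicative (ZMod 2)) (j0 i)) = 0 := rfl
  have h1 : Multiplicative.toAdd ((1 : Fin 6 → Multiplicative (ZMod 2)) (j1 i)) = 0 := rfl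
  rw [vu, h0, h1]
  simp [su, E]

/-- Extensionality for algebra endomorphisms of `A`. -/
theorem Aext {f g : A →ₐ[k] A}
    (h : ∀ i, f (algebraMap R A (X i)) = g (algebraMap R A (X i))) : f = g := by
  have key : f.toRingHom = g.toRingHom := by
    refine IsLocalization.ringHom_ext (Submonoid.powers (ff k)) ?_
    refine MvPolynomial.ringHom_ext (fun a => ?_) (fun i => h i)
    show f (algebraMap R A (C a)) = g (algebraMap R A (C a))
    rw [show (C a : MvPolynomial (Fin 3) k) = algebraMap k R a from rfl,
      ← IsScalarTower.algebraMap_apply, f.commutes, g.commutes]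
  exact AlgHom.ext fun x => RingHom.congr_fun key x

theorem hA_comp (ε η) : (hA k ε).comp (hA k η) = hA k (ε * η) := by
  refine Aext k fun i => ?_
  rw [AlgHom.comp_apply, ← ua_coe, hA_ua, hA_vu, hA_ua]

theorem hA_invol (ε) : (hA k ε).comp (hA k ε) = AlgHom.id k A := by
  rw [hA_comp, mul_self_eq_one]
  refine Aext k fun i => ?_
  rw [← ua_coe, hA_ua, vu_one, AlgHom.id_apply]

/-- The automorphism of `A` indexed by `ε`. -/
def αA (ε : Fin 6 → Multiplicative (ZMod 2)) : A ≃ₐ[k] A := AlgEquiv.ofAlgHom (hA k ε) (hA k ε) (hA_invol k ε) (hA_invol k ε)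

theorem αA_apply (ε) (a : A) : αA k ε a = hA k ε a := rfl

theorem map_nzd (ε) : Submonoid.map (αA k ε) (nonZeroDivisors A) = nonZeroDivisors A := by
  ext x
  simp only [Submonoid.mem_map, mem_nonZeroDivisors_iff_ne_zero]
  constructor
  · rintro ⟨y, hy, rfl⟩
    intro h
    exact hy (by simpa using congrArg (αA k ε).symm h)
  · intro hx
    exact ⟨(αA k ε).symm x, fun h => hx (by simpa using congrArg (αA k ε) h), by simp⟩

/-- The automorphism of `K` indexed by `ε`. -/
def σK (ε : Fin 6 → Multiplicative (ZMod 2)) : K ≃ₐ[k] K :=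
  IsLocalization.algEquivOfAlgEquiv (M := nonZeroDivisors A) (T := nonZeroDivisors A)
    K K (αA k ε) (map_nzd k ε)

theorem σK_algAK (ε) (a : A) : σK k ε (algebraMap A K a) = algebraMap A K (αA k ε a) :=
  IsLocalization.algEquivOfAlgEquiv_eq (map_nzd k ε) a

theorem σK_XX (ε) (i : Fin 3) :
    σK k ε (algebraMap R K (X i)) = algebraMap A K ((vu k ε i : Aˣ) : A) := by
  rw [IsScalarTower.algebraMap_apply R A K, σK_algAK]
  congr 1
  rw [αA_apply, ← ua_coe, hA_ua]

/-- Extensionality for algebra automorphisms of `K`. -/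
theorem Kext {f g : K ≃ₐ[k] K}
    (h : ∀ i, f (algebraMap R K (X i)) = g (algebraMap R K (X i))) : f = g := by
  have key : f.toAlgHom.toRingHom = g.toAlgHom.toRingHom := by
    refine IsLocalization.ringHom_ext (nonZeroDivisors R) ?_
    refine MvPolynomial.ringHom_ext (fun a => ?_) (fun i => h i)
    show f (algebraMap R K (C a)) = g (algebraMap R K (C a))
    rw [show (C a : MvPolynomial (Fin 3) k) = algebraMap k R a from rfl,
      ← IsScalarTower.algebraMap_apply, AlgEquiv.commutes, AlgEquiv.commutes]
  exact AlgEquiv.ext fun x => RingHom.congr_fun key x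

/-- The group homomorphism `(ℤ/2)⁶ →* Cr₃(k)`. -/
def φ : (Fin 6 → Multiplicative (ZMod 2)) →* (K ≃ₐ[k] K) where
  toFun ε := σK k ε
  map_one' := Kext k fun i => by
    rw [σK_XX, AlgEquiv.one_apply, vu_one, ua_coe, algAK_algRA]
  map_mul' ε η := Kext k fun i => by
    rw [σK_XX]
    have hmul : (σK k ε * σK k η) (algebraMap R K (X i))
        = σK k ε (σK k η (algebraMap R K (X i))) := rfl
    rw [hmul, σK_XX, σK_algAK, αA_apply, hA_vu]

theorem φ_ker (ε) (h : φ k ε = 1) : ε = 1 := by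
  have hi : ∀ i, vu k ε i = ua k i := by
    intro i
    have h1 := congrArg (fun e : K ≃ₐ[k] K => e (algebraMap R K (X i))) h
    rw [show (φ k ε) (algebraMap R K (X i))
      = algebraMap A K ((vu k ε i : Aˣ) : A) from σK_XX k ε i, AlgEquiv.one_apply,
      IsScalarTower.algebraMap_apply R A K] at h1
    exact Units.ext (algAK_inj k h1)
  have hbit : ∀ i : Fin 3,
      Multiplicative.toAdd (ε (j0 i)) = 0 ∧ Multiplicative.toAdd (ε (j1 i)) = 0 := by
    intro i
    rcases zmod2_cases (Multiplicative.toAdd (ε (j0 i))) with ha | ha <;>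
      rcases zmod2_cases (Multiplicative.toAdd (ε (j1 i))) with hb | hb
    · exact ⟨ha, hb⟩
    · exfalso
      have h1 : (ua k i)⁻¹ = ua k i := by
        have hv := hi i
        rw [vu, ha, hb, su_zero, E_one, one_mul, zpow_neg_one] at hv
        exact hv
      have h2' : ua k i * ua k i = 1 := by
        nth_rewrite 1 [← h1]
        exact inv_mul_cancel _
      have h3 : (X i : MvPolynomial (Fin 3) k) * X i = 1 := by
        have hval := congrArg Units.val h2'
        simp only [Units.val_mul, ua_coe, Units.val_one] at hval
        rw [← map_mul, ← map_one (algebraMap R A)] at hval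
        exact algRA_inj k hval
      have := congrArg (MvPolynomial.eval (fun _ => (0 : k))) h3
      simp at this
    · exfalso
      have hv := hi i
      rw [vu, ha, hb, su_one, E_zero, zpow_one] at hv
      have h3 : -(X i : MvPolynomial (Fin 3) k) = X i := by
        have hval := congrArg Units.val hv
        simp only [Units.val_mul, Units.val_neg, Units.val_one, ua_coe, neg_one_mul] at hval
        rw [← map_neg] at hval
        exact algRA_inj k hval
      have := congrArg (MvPolynomial.eval (fun _ => (1 : k))) h3
      simp only [map_neg, eval_X] at this
      norm_num at this
    · exfalso
      have hv := hi i
      rw [vu, ha, hb, su_one, E_one, zpow_neg_one] at hv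
      have h2' : ua k i * ua k i = -1 := by
        have h4 := congrArg (· * ua k i) hv
        simp only [mul_assoc, inv_mul_cancel, mul_one] at h4
        exact h4.symm
      have h3 : (X i : MvPolynomial (Fin 3) k) * X i = -1 := by
        have hval := congrArg Units.val h2'
        simp only [Units.val_mul, ua_coe, Units.val_neg, Units.val_one] at hval
        rw [← map_mul, show (-1 : A) = algebraMap R A (-1) by simp] at hval
        exact algRA_inj k hval
      have := congrArg (MvPolynomial.eval (fun _ => (0 : k))) h3
      simp at this
  funext j
  rcases lt_or_ge j.1 3 with hj | hj
  · have hje : j = j0 ⟨j.1, hj⟩ := Fin.ext rfl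
    rw [hje]
    exact toAdd_eq_zero.mp (hbit ⟨j.1, hj⟩).1
  · have hje : j = j1 ⟨j.1 - 3, by omega⟩ := Fin.ext (by simp [j1]; omega)
    rw [hje]
    exact toAdd_eq_zero.mp (hbit ⟨j.1 - 3, by omega⟩).2

theorem φ_inj : Function.Injective (φ k) :=
  (injective_iff_map_eq_one (φ k)).mpr (φ_ker k)

end CremonaAux
end

/-- The space Cremona group `Cr₃(k)`, realized as the group of `k`-algebra
automorphisms of the rational function field `k(x₁,x₂,x₃)`. -/
abbrev Cremona3 (k : Type*) [Field k] : Type _ :=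
  FractionRing (MvPolynomial (Fin 3) k) ≃ₐ[k] FractionRing (MvPolynomial (Fin 3) k)

/-- There exists an elementary abelian 2-subgroup of rank exactly `6`, i.e. a subgroup
isomorphic to `(ℤ/2ℤ)^6`, inside `Cr₃(k)` for `k` algebraically closed of characteristic 0:
the bound `r(G) ≤ 6` is sharp. -/
theorem exists_elementary_abelian_two_subgroup_of_rank_six_Cremona3
    (k : Type*) [Field k] [IsAlgClosed k] [CharZero k] :
    ∃ G : Subgroup (Cremona3 k),
      Nonempty (G ≃* (Fin 6 → Multiplicative (ZMod 2))) := by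
  exact ⟨(CremonaAux.φ k).range, ⟨(MonoidHom.ofInjective (CremonaAux.φ_inj k)).symm⟩⟩
end

section
/- Let k be an algebraically closed field of characteristic 0 and let n be an even positive integer. Every elementary abelian 2-subgroup G of the projective general linear group PGL_{n+1}(k) = GL_{n+1}(k)/Z(GL_{n+1}(k)) is conjugate in PGL_{n+1}(k) to a subgroup of the image of the diagonal matrices; in particular r(G) ≤ n, i.e. |G| ≤ 2^n. -/
set_option maxHeartbeats 1000000

open Matrix



/-- An involution acts on its maximal generalised eigenspaces as the scalar. -/
lemma involution_apply_eq_smul_of_mem_maxGenEigenspace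
    {k : Type*} [Field k] [CharZero k] {V : Type*} [AddCommGroup V] [Module k V]
    (g : Module.End k V) (hg : ∀ v, g (g v) = v) (μ : k) (v : V)
    (hv : v ∈ g.maxGenEigenspace μ) : g v = μ • v := by
  have hmap : g v ∈ g.maxGenEigenspace μ :=
    Module.End.mapsTo_maxGenEigenspace_of_comm rfl μ hv
  set a : V := (2 : k)⁻¹ • (v + g v) with ha
  set b : V := (2 : k)⁻¹ • (v - g v) with hb
  have h2 : (2 : k) ≠ 0 := two_ne_zero
  have hab : a + b = v := by
    rw [ha, hb, ← smul_add]
    have : v + g v + (v - g v) = (2 : k) • v := by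
      rw [two_smul]; abel
    rw [this, smul_smul, inv_mul_cancel₀ h2, one_smul]
  have haE : a ∈ g.eigenspace 1 := by
    rw [Module.End.mem_eigenspace_iff, one_smul, ha, _root_.map_smul, map_add, hg]
    rw [add_comm]
  have hbE : b ∈ g.eigenspace (-1) := by
    rw [Module.End.mem_eigenspace_iff, hb, _root_.map_smul, map_sub, hg, smul_comm]
    rw [neg_smul, one_smul, neg_sub]
  have haW : a ∈ g.maxGenEigenspace μ := Submodule.smul_mem _ _ (Submodule.add_mem _ hv hmap)
  have hbW : b ∈ g.maxGenEigenspace μ := Submodule.smul_mem _ _ (Submodule.sub_mem _ hv hmap)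
  rcases eq_or_ne μ 1 with rfl | hμ1
  · have : b = 0 := by
      have hd := g.disjoint_genEigenspace (show (-1 : k) ≠ 1 by norm_num) 1 ⊤
      exact (Submodule.mem_bot k).mp (hd.le_bot ⟨hbE, hbW⟩)
    have hv' : v = a := by rw [← hab, this, add_zero]
    rw [hv', one_smul]
    simpa [Module.End.mem_eigenspace_iff, one_smul] using haE
  rcases eq_or_ne μ (-1) with rfl | hμ2
  · have : a = 0 := by
      have hd := g.disjoint_genEigenspace (show (1 : k) ≠ -1 by norm_num) 1 ⊤
      exact (Submodule.mem_bot k).mp (hd.le_bot ⟨haE, haW⟩)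
    have hv' : v = b := by rw [← hab, this, zero_add]
    rw [hv']
    simpa [Module.End.mem_eigenspace_iff] using hbE
  · have ha0 : a = 0 := by
      have hd := g.disjoint_genEigenspace (show (1 : k) ≠ μ from fun h => hμ1 h.symm) 1 ⊤
      exact (Submodule.mem_bot k).mp (hd.le_bot ⟨haE, haW⟩)
    have hb0 : b = 0 := by
      have hd := g.disjoint_genEigenspace (show (-1 : k) ≠ μ from fun h => hμ2 h.symm) 1 ⊤
      exact (Submodule.mem_bot k).mp (hd.le_bot ⟨hbE, hbW⟩)
    have : v = 0 := by rw [← hab, ha0, hb0, add_zero]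
    simp [this]

/-- A commuting family of matrix involutions is simultaneously diagonalizable. -/
lemma simultaneous_diagonalization
    {k : Type*} [Field k] [IsAlgClosed k] [CharZero k] {m : ℕ} {ι : Type*}
    (A : ι → Matrix (Fin m) (Fin m) k)
    (hcomm : ∀ i j, A i * A j = A j * A i) (hinv : ∀ i, A i * A i = 1) :
    ∃ P Q : Matrix (Fin m) (Fin m) k, P * Q = 1 ∧ Q * P = 1 ∧
      ∀ i, (P * A i * Q).IsDiag := by
  classical
  set V := Fin m → k
  set f : ι → Module.End k V := fun i => Matrix.toLinAlgEquiv' (A i) with hf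
  have hfc : ∀ i j, Commute (f i) (f j) := by
    intro i j
    simp only [hf, Commute, SemiconjBy, ← _root_.map_mul, hcomm]
  have hfmul : ∀ i, f i * f i = 1 := by
    intro i
    rw [hf, ← _root_.map_mul, hinv, _root_.map_one]
  have hfinv : ∀ i (v : V), f i (f i v) = v := by
    intro i v
    have := congrFun (congrArg DFunLike.coe (hfmul i)) v
    simpa [Module.End.mul_apply] using this
  have hT : ⨆ χ : ι → k, ⨅ i, (f i).maxGenEigenspace (χ i) = ⊤ :=
    Module.End.iSup_iInf_maxGenEigenspace_eq_top_of_iSup_maxGenEigenspace_eq_top_of_commute f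
      (fun i j _ => hfc i j) (fun i => Module.End.iSup_maxGenEigenspace_eq_top (f i))
  have hInd : iSupIndep fun χ : ι → k => ⨅ i, (f i).maxGenEigenspace (χ i) :=
    Module.End.independent_iInf_maxGenEigenspace_of_forall_mapsTo f
      (fun i j φ => Module.End.mapsTo_maxGenEigenspace_of_comm (hfc j i) φ)
  set W : (ι → k) → Submodule k V := fun χ => ⨅ i, (f i).maxGenEigenspace (χ i) with hW
  have internal : DirectSum.IsInternal W :=
    DirectSum.isInternal_submodule_of_iSupIndep_of_iSup_eq_top hInd hT
  set bW : ∀ χ, Module.Basis (Module.Free.ChooseBasisIndex k (W χ)) k (W χ) :=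
    fun χ => Module.Free.chooseBasis k (W χ) with hbW
  set b : Module.Basis (Σ χ : ι → k, Module.Free.ChooseBasisIndex k (W χ)) k V :=
    internal.collectedBasis bW with hbdef
  haveI : Fintype (Σ χ : ι → k, Module.Free.ChooseBasisIndex k (W χ)) :=
    FiniteDimensional.fintypeBasisIndex b
  have hcard : Fintype.card (Σ χ : ι → k, Module.Free.ChooseBasisIndex k (W χ)) =
      Fintype.card (Fin m) := by
    rw [← Module.finrank_eq_card_basis b, Fintype.card_fin, Module.finrank_fin_fun]
  set eqv := Fintype.equivOfCardEq hcard
  set b' : Module.Basis (Fin m) k V := b.reindex eqv with hb'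
  have key : ∀ (i : ι) (p : Fin m), f i (b' p) = ((eqv.symm p).1 i) • b' p := by
    intro i p
    apply involution_apply_eq_smul_of_mem_maxGenEigenspace (f i) (hfinv i)
    have hmem : b (eqv.symm p) ∈ W (eqv.symm p).1 := internal.collectedBasis_mem bW _
    have := (iInf_le (fun j => (f j).maxGenEigenspace ((eqv.symm p).1 j)) i) hmem
    simpa [hb', Module.Basis.reindex_apply] using this
  have hDiag : ∀ i, LinearMap.toMatrix b' b' (f i) =
      Matrix.diagonal (fun p => (eqv.symm p).1 i) := by
    intro i
    ext p q
    rw [LinearMap.toMatrix_apply, key i q, _root_.map_smul, Module.Basis.repr_self]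
    rw [Matrix.diagonal_apply]
    simp only [Finsupp.smul_single, smul_eq_mul, mul_one, Finsupp.single_apply]
    by_cases hpq : p = q
    · subst hpq; simp
    · simp [hpq, Ne.symm hpq]
  set e : Module.Basis (Fin m) k V := Pi.basisFun k (Fin m) with he
  refine ⟨b'.toMatrix e, e.toMatrix b', Module.Basis.toMatrix_mul_toMatrix_flip _ _,
    Module.Basis.toMatrix_mul_toMatrix_flip _ _, fun i => ?_⟩
  have hAe : LinearMap.toMatrix e e (f i) = A i := by
    have hfl : f i = Matrix.toLin' (A i) := LinearMap.ext fun v => by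
      rw [hf]; rw [Matrix.toLinAlgEquiv'_apply, Matrix.toLin'_apply]
    rw [he, LinearMap.toMatrix_eq_toMatrix', hfl]
    exact LinearMap.toMatrix'_toLin' (A i)
  have := basis_toMatrix_mul_linearMap_toMatrix_mul_basis_toMatrix b' e b' e (f i)
  rw [hAe] at this
  rw [this, hDiag i]
  exact Matrix.isDiag_diagonal _

/-- Elements of the center of `GL` are scalar matrices. -/
lemma center_GL_scalar {k : Type*} [Field k] {m : ℕ}
    (u : GL (Fin m) k) (hu : u ∈ Subgroup.center (GL (Fin m) k)) :
    ∃ a : k, (u : Matrix (Fin m) (Fin m) k) = Matrix.scalar (Fin m) a := by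
  have h := Matrix.mem_range_scalar_of_commute_transvectionStruct
    (M := (u : Matrix (Fin m) (Fin m) k)) ?_
  · obtain ⟨a, ha⟩ := h
    exact ⟨a, ha.symm⟩
  · intro t
    set T : GL (Fin m) k := ⟨t.toMatrix, t.inv.toMatrix, t.mul_inv, t.inv_mul⟩ with hT
    have := (Subgroup.mem_center_iff.mp hu T)
    have h2 : ((T * u : GL (Fin m) k) : Matrix (Fin m) (Fin m) k)
        = ((u * T : GL (Fin m) k) : Matrix (Fin m) (Fin m) k) := by rw [this]
    simpa [Commute, SemiconjBy, hT] using h2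
/-- Scalar units are central in GL. -/
lemma scalar_mem_center_GL {k : Type*} [Field k] {m : ℕ}
    (a : kˣ) : (Units.map (Matrix.scalar (Fin m)).toMonoidHom a : GL (Fin m) k)
      ∈ Subgroup.center (GL (Fin m) k) := by
  rw [Subgroup.mem_center_iff]
  intro g
  ext : 1
  show (g : Matrix (Fin m) (Fin m) k) * Matrix.scalar (Fin m) (a : k)
      = Matrix.scalar (Fin m) (a : k) * (g : Matrix (Fin m) (Fin m) k)
  exact (Matrix.scalar_commute (n := Fin m) (a : k) (fun r => mul_comm _ _) (g : Matrix (Fin m) (Fin m) k)).symm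


/-- The projective general linear group `PGL_m(k) = GL_m(k)/Z(GL_m(k))`. -/
abbrev PGL (m : ℕ) (k : Type*) [Field k] : Type _ :=
  GL (Fin m) k ⧸ Subgroup.center (GL (Fin m) k)

/-- For `n` even and positive and `k` algebraically closed of characteristic 0, every
elementary abelian 2-subgroup `G ≅ (ℤ/2ℤ)^r` of `PGL_{n+1}(k)` is conjugate to a subgroup
of the image of the diagonal matrices; in particular `r ≤ n`. -/
theorem elementary_abelian_two_subgroup_PGL_conjugate_to_diagonal
    (k : Type*) [Field k] [IsAlgClosed k] [CharZero k]
    (n : ℕ) (hn : 0 < n) (hn2 : Even n)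
    (G : Subgroup (PGL (n + 1) k)) (r : ℕ)
    (h : Nonempty (G ≃* (Fin r → Multiplicative (ZMod 2)))) :
    (∃ c : PGL (n + 1) k, ∀ g ∈ G, ∃ D : GL (Fin (n + 1)) k,
        Matrix.IsDiag (D : Matrix (Fin (n + 1)) (Fin (n + 1)) k) ∧
        c * g * c⁻¹ = QuotientGroup.mk' (Subgroup.center (GL (Fin (n + 1)) k)) D) ∧
      r ≤ n := by
  classical
  obtain ⟨ψ⟩ := h
  set π : GL (Fin (n + 1)) k →* PGL (n + 1) k :=
    QuotientGroup.mk' (Subgroup.center (GL (Fin (n + 1)) k)) with hπ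
  -- basic facts about G
  haveI hGfin : Finite G := Finite.of_equiv _ ψ.toEquiv.symm
  have hzmod : ∀ y : Fin r → Multiplicative (ZMod 2), y * y = 1 := by
    intro y
    funext i
    have h2 : ∀ a : ZMod 2, a + a = 0 := by decide
    show y i * y i = 1
    rw [← ofAdd_toAdd (y i), ← ofAdd_add, h2, ofAdd_zero]
  have hG2 : ∀ g ∈ G, g * g = 1 := by
    intro g hg
    have := ψ.injective (a₁ := ⟨g, hg⟩ * ⟨g, hg⟩) (a₂ := 1)
      (by rw [_root_.map_mul, _root_.map_one, hzmod])
    exact Subtype.ext_iff.mp this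
  have hGcomm : ∀ g₁ ∈ G, ∀ g₂ ∈ G, g₁ * g₂ = g₂ * g₁ := by
    intro g₁ h₁ g₂ h₂
    have := ψ.injective (a₁ := ⟨g₁, h₁⟩ * ⟨g₂, h₂⟩) (a₂ := ⟨g₂, h₂⟩ * ⟨g₁, h₁⟩)
      (by rw [_root_.map_mul, _root_.map_mul, mul_comm])
    exact Subtype.ext_iff.mp this
  have hcardG : Nat.card G = 2 ^ r := by
    rw [Nat.card_congr ψ.toEquiv]
    simp [Nat.card_eq_fintype_card]
  -- the subgroup H of GL : preimage of G with determinant 1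
  set detH : GL (Fin (n + 1)) k →* kˣ := Matrix.GeneralLinearGroup.det with hdetH
  set H : Subgroup (GL (Fin (n + 1)) k) := G.comap π ⊓ detH.ker with hH
  set φ : H →* PGL (n + 1) k := π.comp H.subtype with hφ
  set N : Subgroup H := φ.ker with hN
  have hHdet : ∀ x : H, ((x : GL (Fin (n + 1)) k) : Matrix (Fin (n + 1)) (Fin (n + 1)) k).det
      = 1 := by
    intro x
    have hx : detH (x : GL (Fin (n + 1)) k) = 1 := x.2.2
    have := congrArg (fun u : kˣ => (u : k)) hx
    simpa [hdetH] using this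
  have hHmem : ∀ x : H, φ x ∈ G := fun x => x.2.1
  -- surjectivity of φ onto G
  have hsurj : ∀ g ∈ G, ∃ x : H, φ x = g := by
    intro g hg
    obtain ⟨w, hw⟩ := QuotientGroup.mk'_surjective (Subgroup.center (GL (Fin (n + 1)) k)) g
    set d : kˣ := detH w with hd
    obtain ⟨μ, hμ⟩ := IsAlgClosed.exists_pow_nat_eq (((d⁻¹ : kˣ) : k)) (Nat.succ_pos n)
    have hμ0 : μ ≠ 0 := by
      intro h0
      rw [h0, zero_pow (Nat.succ_ne_zero n)] at hμ
      exact Units.ne_zero _ hμ.symm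
    set s : GL (Fin (n + 1)) k :=
      Units.map (Matrix.scalar (Fin (n + 1))).toMonoidHom (Units.mk0 μ hμ0) with hs
    have hπs : π s = 1 := (QuotientGroup.eq_one_iff _).mpr (scalar_mem_center_GL _)
    have hdets : ((detH s : kˣ) : k) = μ ^ (n + 1) := by
      show ((s : Matrix (Fin (n + 1)) (Fin (n + 1)) k)).det = μ ^ (n + 1)
      have : (s : Matrix (Fin (n + 1)) (Fin (n + 1)) k) = Matrix.scalar (Fin (n + 1)) μ := rfl
      rw [this, Matrix.scalar_apply, Matrix.det_diagonal, Finset.prod_const]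
      simp
    have hdet1 : detH (s * w) = 1 := by
      rw [_root_.map_mul]
      ext
      push_cast
      rw [hdets, hμ, ← hd]
      simp
    have hmem : s * w ∈ H := by
      constructor
      · show π (s * w) ∈ G
        rw [_root_.map_mul, hπs, one_mul, hw]
        exact hg
      · exact hdet1
    exact ⟨⟨s * w, hmem⟩, by
      show π (s * w) = g
      rw [_root_.map_mul, hπs, one_mul, hw]⟩
  -- elements of N are scalar and of odd order
  have hNscalar : ∀ x : H, x ∈ N → ∃ a : k,
      ((x : GL (Fin (n + 1)) k) : Matrix (Fin (n + 1)) (Fin (n + 1)) k)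
        = Matrix.scalar (Fin (n + 1)) a := by
    intro x hx
    have : (x : GL (Fin (n + 1)) k) ∈ Subgroup.center (GL (Fin (n + 1)) k) := by
      have := hx
      rw [hN, MonoidHom.mem_ker] at this
      exact (QuotientGroup.eq_one_iff _).mp this
    exact center_GL_scalar _ this
  have hNpow : ∀ x : H, x ∈ N → x ^ (n + 1) = 1 := by
    intro x hx
    obtain ⟨a, ha⟩ := hNscalar x hx
    have hdet : a ^ (n + 1) = 1 := by
      have := hHdet x
      rw [ha, Matrix.scalar_apply, Matrix.det_diagonal, Finset.prod_const] at this
      simpa using this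
    have hmat : (((x : GL (Fin (n + 1)) k) ^ (n + 1) : GL (Fin (n + 1)) k) :
        Matrix (Fin (n + 1)) (Fin (n + 1)) k) = 1 := by
      rw [Units.val_pow_eq_pow_val, ha, ← _root_.map_pow, hdet, _root_.map_one]
    have : (x : GL (Fin (n + 1)) k) ^ (n + 1) = 1 := Units.ext hmat
    exact Subtype.ext this
  -- N is finite with odd cardinality
  have hrootsfin : ({x : k | x ^ (n + 1) = 1} : Set k).Finite := by
    have hp0 : (Polynomial.X ^ (n + 1) - Polynomial.C 1 : Polynomial k) ≠ 0 :=
      Polynomial.X_pow_sub_C_ne_zero (Nat.succ_pos n) 1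
    refine Set.Finite.subset (Polynomial.finite_setOf_isRoot hp0) ?_
    intro x hx
    simp only [Set.mem_setOf_eq] at hx ⊢
    simp [Polynomial.IsRoot, sub_eq_zero, hx]
  haveI : Finite ({x : k | x ^ (n + 1) = 1} : Set k) := hrootsfin.to_subtype
  haveI hNfin : Finite N := by
    have hinj : Function.Injective (fun y : N =>
        (⟨(((y : H) : GL (Fin (n + 1)) k) : Matrix (Fin (n + 1)) (Fin (n + 1)) k) 0 0, by
          obtain ⟨a, ha⟩ := hNscalar (y : H) y.2
          have hy := hNpow (y : H) y.2
          have hy' : (((y : H) : GL (Fin (n + 1)) k) : Matrix (Fin (n + 1)) (Fin (n + 1)) k)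
              ^ (n + 1) = 1 := by
            have := congrArg (fun z : H => ((z : GL (Fin (n + 1)) k) :
              Matrix (Fin (n + 1)) (Fin (n + 1)) k)) hy
            simpa [Units.val_pow_eq_pow_val] using this
          rw [ha] at hy'
          rw [← _root_.map_pow] at hy'
          have := congrFun (congrFun (congrArg (Matrix.diagonal ∘ Function.const (Fin (n+1)))
            (rfl : a = a)) 0) 0
          show (((y : H) : GL (Fin (n + 1)) k) :
            Matrix (Fin (n + 1)) (Fin (n + 1)) k) 0 0 ^ (n + 1) = 1
          rw [ha]
          have h00 : Matrix.scalar (Fin (n + 1)) a 0 0 = a := by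
            rw [Matrix.scalar_apply, Matrix.diagonal_apply_eq]
          rw [h00]
          have := congrFun (congrFun hy' 0) 0
          rw [Matrix.scalar_apply] at this
          simpa using this⟩ : ({x : k | x ^ (n + 1) = 1} : Set k))) := by
      intro y₁ y₂ hy
      obtain ⟨a₁, ha₁⟩ := hNscalar (y₁ : H) y₁.2
      obtain ⟨a₂, ha₂⟩ := hNscalar (y₂ : H) y₂.2
      have hval : (((y₁ : H) : GL (Fin (n + 1)) k) :
          Matrix (Fin (n + 1)) (Fin (n + 1)) k) 0 0 =
          (((y₂ : H) : GL (Fin (n + 1)) k) : Matrix (Fin (n + 1)) (Fin (n + 1)) k) 0 0 :=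
        congrArg Subtype.val hy
      rw [ha₁, ha₂] at hval
      rw [Matrix.scalar_apply, Matrix.diagonal_apply_eq, Matrix.scalar_apply,
        Matrix.diagonal_apply_eq] at hval
      have hmat : (((y₁ : H) : GL (Fin (n + 1)) k) :
          Matrix (Fin (n + 1)) (Fin (n + 1)) k) =
          (((y₂ : H) : GL (Fin (n + 1)) k) : Matrix (Fin (n + 1)) (Fin (n + 1)) k) := by
        rw [ha₁, ha₂, hval]
      exact Subtype.ext (Subtype.ext (Units.ext hmat))
    exact Finite.of_injective _ hinj
  have hNodd : ¬ (2 ∣ Nat.card N) := by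
    intro hdvd
    haveI : Fact (Nat.Prime 2) := ⟨Nat.prime_two⟩
    obtain ⟨y, hy⟩ := exists_prime_orderOf_dvd_card' (G := N) 2 hdvd
    have hypow : y ^ (n + 1) = 1 := by
      have := hNpow (y : H) y.2
      exact Subtype.ext this
    have : orderOf y ∣ n + 1 := orderOf_dvd_of_pow_eq_one hypow
    rw [hy] at this
    have hodd : Odd (n + 1) := Even.add_one hn2
    rw [← Nat.not_even_iff_odd] at hodd
    exact hodd ((even_iff_two_dvd).mpr this)
  -- H is finite
  have hrange_le : φ.range ≤ G := by
    rintro _ ⟨x, rfl⟩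
    exact hHmem x
  haveI hGsetfin : Finite (G : Set (PGL (n + 1) k)) := hGfin
  haveI hrangefin : Finite φ.range := by
    have : ((φ.range : Set (PGL (n + 1) k))).Finite :=
      Set.Finite.subset (Set.toFinite _) hrange_le
    exact this.to_subtype
  haveI hquotfin : Finite (H ⧸ N) :=
    Finite.of_equiv _ (QuotientGroup.quotientKerEquivRange φ).toEquiv.symm
  haveI hHfin : Finite H :=
    Finite.of_equiv _ (Subgroup.groupEquivQuotientProdSubgroup (s := N)).symm
  -- Schur-Zassenhaus
  have hindex : N.index ∣ 2 ^ r := by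
    have h1 : N.index = Nat.card (H ⧸ N) := rfl
    have h2 : Nat.card (H ⧸ N) = Nat.card φ.range :=
      Nat.card_congr (QuotientGroup.quotientKerEquivRange φ).toEquiv
    rw [h1, h2, ← hcardG]
    exact Subgroup.card_dvd_of_le hrange_le
  have hcop : Nat.Coprime (Nat.card N) N.index := by
    have h2 : Nat.Coprime (Nat.card N) 2 := by
      rw [Nat.coprime_comm]
      exact (Nat.prime_two.coprime_iff_not_dvd).mpr hNodd
    exact Nat.Coprime.coprime_dvd_right hindex (Nat.Coprime.pow_right r h2)
  obtain ⟨C, hC⟩ := Subgroup.exists_right_complement'_of_coprime hcop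
  -- properties of C
  have hCtriv : ∀ x : H, x ∈ N → x ∈ C → x = 1 := by
    intro x hxN hxC
    have := hC.disjoint.le_bot (Subgroup.mem_inf.mpr ⟨hxN, hxC⟩)
    simpa using this
  have hCsurj : ∀ g ∈ G, ∃ x : H, x ∈ C ∧ φ x = g := by
    intro g hg
    obtain ⟨x, hx⟩ := hsurj g hg
    obtain ⟨⟨y, z⟩, hyz, -⟩ := hC.existsUnique x
    refine ⟨(z : H), z.2, ?_⟩
    have hy1 : φ (y : H) = 1 := y.2
    have hxx : (y : H) * (z : H) = x := hyz
    rw [← hx, ← hxx, _root_.map_mul, hy1, one_mul]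
  -- every element of C is an involution, and C is commutative
  have hC2 : ∀ x : H, x ∈ C → x * x = 1 := by
    intro x hx
    have hmem : φ (x * x) = 1 := by
      rw [_root_.map_mul]
      exact hG2 (φ x) (hHmem x)
    exact hCtriv _ hmem (mul_mem hx hx)
  have hCcomm : ∀ x : H, x ∈ C → ∀ y : H, y ∈ C → x * y = y * x := by
    intro x hx y hy
    have hmem : φ (x * y * (y * x)⁻¹) = 1 := by
      rw [_root_.map_mul, _root_.map_inv, _root_.map_mul, _root_.map_mul,
        hGcomm (φ x) (hHmem x) (φ y) (hHmem y)]
      group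
    have := hCtriv _ hmem (by
      exact mul_mem (mul_mem hx hy) (inv_mem (mul_mem hy hx)))
    rw [mul_inv_eq_one] at this
    exact this
  -- simultaneous diagonalization of the family C
  set A : C → Matrix (Fin (n + 1)) (Fin (n + 1)) k :=
    fun c => (((c : H) : GL (Fin (n + 1)) k) : Matrix (Fin (n + 1)) (Fin (n + 1)) k) with hA
  have hAcomm : ∀ c₁ c₂ : C, A c₁ * A c₂ = A c₂ * A c₁ := by
    intro c₁ c₂
    have := hCcomm (c₁ : H) c₁.2 (c₂ : H) c₂.2
    have := congrArg (fun z : H => ((z : GL (Fin (n + 1)) k) :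
      Matrix (Fin (n + 1)) (Fin (n + 1)) k)) this
    simpa [hA, Units.val_mul] using this
  have hAinv : ∀ c : C, A c * A c = 1 := by
    intro c
    have := hC2 (c : H) c.2
    have := congrArg (fun z : H => ((z : GL (Fin (n + 1)) k) :
      Matrix (Fin (n + 1)) (Fin (n + 1)) k)) this
    simpa [hA, Units.val_mul] using this
  obtain ⟨P, Q, hPQ, hQP, hdiag⟩ := simultaneous_diagonalization A hAcomm hAinv
  set Pu : GL (Fin (n + 1)) k := ⟨P, Q, hPQ, hQP⟩ with hPu
  refine ⟨⟨π Pu, ?_⟩, ?_⟩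
  · -- the conjugation statement
    intro g hg
    obtain ⟨x, hxC, hxg⟩ := hCsurj g hg
    set c : C := ⟨x, hxC⟩ with hc
    set Du : GL (Fin (n + 1)) k := Pu * (x : GL (Fin (n + 1)) k) * Pu⁻¹ with hDu
    refine ⟨Du, ?_, ?_⟩
    · have : (Du : Matrix (Fin (n + 1)) (Fin (n + 1)) k) = P * A c * Q := by
        rw [hDu]
        simp only [Units.val_mul]
        rfl
      rw [this]
      exact hdiag c
    · rw [← hxg]
      show π Pu * φ ((c : H)) * (π Pu)⁻¹ = π Du
      rw [hDu, _root_.map_mul, _root_.map_mul, _root_.map_inv]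
      rfl
  · -- the rank bound
    -- the diagonal entries of the conjugated matrices
    set d : C → Fin (n + 1) → k := fun c j => (P * A c * Q) j j with hd
    have hdg : ∀ c : C, P * A c * Q = Matrix.diagonal (d c) := by
      intro c
      exact ((hdiag c).diagonal_diag).symm
    have hsq : ∀ (c : C) (j : Fin (n + 1)), d c j * d c j = 1 := by
      intro c j
      have hm : (P * A c * Q) * (P * A c * Q) = 1 := by
        calc (P * A c * Q) * (P * A c * Q) = P * A c * (Q * P) * A c * Q := by
              noncomm_ring
          _ = P * (A c * A c) * Q := by rw [hQP]; noncomm_ring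
          _ = 1 := by rw [hAinv, mul_one, hPQ]
      rw [hdg c, Matrix.diagonal_mul_diagonal] at hm
      have := congrFun (congrFun hm j) j
      simpa using this
    have hpm : ∀ (c : C) (j : Fin (n + 1)), d c j = 1 ∨ d c j = -1 := by
      intro c j
      exact mul_self_eq_one_iff.mp (hsq c j)
    have hprod : ∀ c : C, (∏ j, d c j) = 1 := by
      intro c
      have hdet : (P * A c * Q).det = 1 := by
        rw [Matrix.det_mul, Matrix.det_mul]
        have hPQdet : P.det * Q.det = 1 := by
          rw [← Matrix.det_mul, hPQ, Matrix.det_one]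
        have hAdet : (A c).det = 1 := hHdet (c : H)
        calc P.det * (A c).det * Q.det = (A c).det * (P.det * Q.det) := by ring
          _ = 1 := by rw [hPQdet, hAdet, one_mul]
      rw [hdg c, Matrix.det_diagonal] at hdet
      exact hdet
    -- injection of C into Fin n → Bool
    have hCinj : Function.Injective (fun c : C => fun i : Fin n =>
        decide (d c i.castSucc = 1)) := by
      intro c₁ c₂ hcc
      have hfirst : ∀ i : Fin n, d c₁ i.castSucc = d c₂ i.castSucc := by
        intro i
        have hb : (d c₁ i.castSucc = 1) ↔ (d c₂ i.castSucc = 1) :=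
          decide_eq_decide.mp (congrFun hcc i)
        rcases hpm c₁ i.castSucc with h1 | h1
        · rw [h1, hb.mp h1]
        · rcases hpm c₂ i.castSucc with h2 | h2
          · exact absurd (h1 ▸ hb.mpr h2) (by norm_num)
          · rw [h1, h2]
      have hlast : d c₁ (Fin.last n) = d c₂ (Fin.last n) := by
        have hp1 := hprod c₁
        have hp2 := hprod c₂
        rw [Fin.prod_univ_castSucc] at hp1 hp2
        have hpe : (∏ i : Fin n, d c₁ i.castSucc) = ∏ i : Fin n, d c₂ i.castSucc :=
          Finset.prod_congr rfl (fun i _ => hfirst i)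
        have hne : (∏ i : Fin n, d c₂ i.castSucc) ≠ 0 := by
          intro h0
          rw [hpe] at hp1
          rw [h0, zero_mul] at hp1
          exact one_ne_zero hp1.symm
        rw [hpe] at hp1
        rw [← hp2] at hp1
        exact mul_left_cancel₀ hne hp1
      have hdeq : d c₁ = d c₂ := by
        funext j
        rcases Fin.eq_castSucc_or_eq_last j with ⟨i, rfl⟩ | rfl
        · exact hfirst i
        · exact hlast
      have hMeq : A c₁ = A c₂ := by
        have h1 : P * A c₁ * Q = P * A c₂ * Q := by rw [hdg c₁, hdg c₂, hdeq]
        calc A c₁ = (Q * P) * A c₁ * (Q * P) := by rw [hQP]; noncomm_ring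
          _ = Q * (P * A c₁ * Q) * P := by noncomm_ring
          _ = Q * (P * A c₂ * Q) * P := by rw [h1]
          _ = (Q * P) * A c₂ * (Q * P) := by noncomm_ring
          _ = A c₂ := by rw [hQP]; noncomm_ring
      exact Subtype.ext (Subtype.ext (Units.ext hMeq))
    -- counting
    have hinjG : Function.Bijective (fun c : C => (⟨φ (c : H), hHmem _⟩ : G)) := by
      constructor
      · intro c₁ c₂ hcc
        have h1 : φ ((c₁ : H) * (c₂ : H)⁻¹) = 1 := by
          rw [_root_.map_mul, _root_.map_inv]
          have : φ (c₁ : H) = φ (c₂ : H) := congrArg Subtype.val hcc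
          rw [this, mul_inv_cancel]
        have := hCtriv _ h1 (mul_mem c₁.2 (inv_mem c₂.2))
        rw [mul_inv_eq_one] at this
        exact Subtype.ext this
      · rintro ⟨g, hg⟩
        obtain ⟨x, hxC, hxg⟩ := hCsurj g hg
        exact ⟨⟨x, hxC⟩, Subtype.ext hxg⟩
    have hcardC : Nat.card C = 2 ^ r := by
      rw [← hcardG]
      exact (Nat.card_eq_of_bijective _ hinjG)
    have hle : Nat.card C ≤ 2 ^ n := by
      have := Nat.card_le_card_of_injective _ hCinj
      calc Nat.card C ≤ Nat.card (Fin n → Bool) := this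
        _ = 2 ^ n := by simp [Nat.card_eq_fintype_card]
    rw [hcardC] at hle
    exact (Nat.pow_le_pow_iff_right (le_refl 2)).mp hle
end

section
/- Let k be an algebraically closed field of characteristic 0 and let m be an odd positive integer. For every finite 2-subgroup G of PGL_m(k) = GL_m(k)/Z(GL_m(k)), there exists a subgroup G' of the special linear group SL_m(k) such that the canonical homomorphism SL_m(k) → PGL_m(k) restricts to an isomorphism from G' onto G. -/
open Matrix

/-- The canonical homomorphism `SL_m(k) → PGL_m(k)`. -/
noncomputable def SLtoPGL (m : ℕ) (k : Type*) [Field k] :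
    Matrix.SpecialLinearGroup (Fin m) k →* PGL m k :=
  (QuotientGroup.mk' (Subgroup.center (GL (Fin m) k))).comp Matrix.SpecialLinearGroup.toGL

section Helpers

variable (k : Type*) [Field k] (m : ℕ)

/-- scalar unit in GL -/
noncomputable def scalarGL (c : kˣ) : GL (Fin m) k :=
  ⟨c • 1, c⁻¹ • 1, by simp [smul_mul_assoc, mul_smul_comm, smul_smul], by
    simp [smul_mul_assoc, mul_smul_comm, smul_smul]⟩

lemma scalarGL_mem_center (c : kˣ) : scalarGL k m c ∈ Subgroup.center (GL (Fin m) k) := by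
  refine Subgroup.mem_center_iff.mpr fun B => Units.ext ?_
  show (B : Matrix (Fin m) (Fin m) k) * (c • 1) = (c • 1) * (B : Matrix (Fin m) (Fin m) k)
  simp [smul_mul_assoc, mul_smul_comm]

/-- the kernel of SLtoPGL is the center of SL -/
lemma ker_SLtoPGL :
    (SLtoPGL m k).ker = Subgroup.center (Matrix.SpecialLinearGroup (Fin m) k) := by
  ext x
  rw [MonoidHom.mem_ker]
  have hval : ((Matrix.SpecialLinearGroup.toGL x : GL (Fin m) k) : Matrix (Fin m) (Fin m) k)
      = (x : Matrix (Fin m) (Fin m) k) := rfl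
  constructor
  · intro hx
    have hc : Matrix.SpecialLinearGroup.toGL x ∈ Subgroup.center (GL (Fin m) k) := by
      rwa [SLtoPGL, MonoidHom.comp_apply, QuotientGroup.mk'_apply,
        QuotientGroup.eq_one_iff] at hx
    obtain ⟨r, hr⟩ := Matrix.mem_range_scalar_of_commute_transvectionStruct
      (M := (x : Matrix (Fin m) (Fin m) k)) (fun tt => by
        have h1 := Subgroup.mem_center_iff.mp hc
          (Matrix.SpecialLinearGroup.toGL ⟨tt.toMatrix, by simp⟩)
        have h2 := congrArg Units.val h1
        exact h2)
    refine Matrix.SpecialLinearGroup.mem_center_iff.mpr ⟨r, ?_, hr⟩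
    have hdet : det (Matrix.scalar (Fin m) r) = 1 := hr ▸ x.property
    simpa using hdet
  · intro hx
    obtain ⟨r, hr1, hr⟩ := Matrix.SpecialLinearGroup.mem_center_iff.mp hx
    rw [SLtoPGL, MonoidHom.comp_apply, QuotientGroup.mk'_apply, QuotientGroup.eq_one_iff]
    refine Subgroup.mem_center_iff.mpr fun B => Units.ext ?_
    show (B : Matrix (Fin m) (Fin m) k) * (x : Matrix (Fin m) (Fin m) k)
      = (x : Matrix (Fin m) (Fin m) k) * (B : Matrix (Fin m) (Fin m) k)
    rw [← hr]
    exact ((Matrix.scalar_commute r (Commute.all r) _)).symm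

lemma SLtoPGL_surjective [IsAlgClosed k] (hm : 0 < m) :
    Function.Surjective (SLtoPGL m k) := by
  intro y
  obtain ⟨g, rfl⟩ := QuotientGroup.mk'_surjective _ y
  obtain ⟨c, hc⟩ := IsAlgClosed.exists_pow_nat_eq
    ((Matrix.GeneralLinearGroup.det g : kˣ) : k) hm
  have hc0 : c ≠ 0 := by
    intro h
    have := hc
    rw [h, zero_pow hm.ne'] at this
    exact (Units.ne_zero _) this.symm
  set cu : kˣ := Units.mk0 c hc0 with hcu
  have hdet : det ((cu⁻¹ : kˣ) • (g : Matrix (Fin m) (Fin m) k)) = 1 := by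
    rw [Units.smul_def, Matrix.det_smul, Fintype.card_fin]
    have : ((cu⁻¹ : kˣ) : k) = c⁻¹ := rfl
    rw [this, inv_pow, hc]
    have hgdet : ((Matrix.GeneralLinearGroup.det g : kˣ) : k)
        = det (g : Matrix (Fin m) (Fin m) k) := by
      simp [Matrix.GeneralLinearGroup.val_det_apply]
    rw [hgdet]
    field_simp
    exact div_self (by rw [← hgdet, ← hc]; exact pow_ne_zero m hc0)
  refine ⟨⟨(cu⁻¹ : kˣ) • (g : Matrix (Fin m) (Fin m) k), hdet⟩, ?_⟩
  show QuotientGroup.mk' (Subgroup.center (GL (Fin m) k)) (Matrix.SpecialLinearGroup.toGL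
    (⟨(cu⁻¹ : kˣ) • (g : Matrix (Fin m) (Fin m) k), hdet⟩ : Matrix.SpecialLinearGroup (Fin m) k)) = _
  rw [QuotientGroup.mk'_eq_mk']
  refine ⟨scalarGL k m cu, scalarGL_mem_center k m cu, Units.ext ?_⟩
  show ((cu⁻¹ : kˣ) • (g : Matrix (Fin m) (Fin m) k)) * ((cu : kˣ) • (1 : Matrix (Fin m) (Fin m) k))
    = (g : Matrix (Fin m) (Fin m) k)
  simp [smul_mul_assoc, mul_smul_comm, smul_smul]

lemma SLtoPGL_ker_pow (x : Matrix.SpecialLinearGroup (Fin m) k)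
    (hx : x ∈ (SLtoPGL m k).ker) : x ^ m = 1 := by
  rw [ker_SLtoPGL] at hx
  obtain ⟨r, hr1, hr⟩ := Matrix.SpecialLinearGroup.mem_center_iff.mp hx
  rw [Fintype.card_fin] at hr1
  refine Subtype.ext ?_
  show (↑(x ^ m) : Matrix (Fin m) (Fin m) k) = 1
  rw [Matrix.SpecialLinearGroup.coe_pow, ← hr, ← _root_.map_pow, hr1, _root_.map_one]

lemma SLtoPGL_ker_finite (hm : 0 < m) : Finite ((SLtoPGL m k).ker) := by
  haveI : NeZero (Fintype.card (Fin m)) := ⟨by simpa using hm.ne'⟩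
  rw [ker_SLtoPGL]
  exact Finite.of_equiv _
    (Matrix.SpecialLinearGroup.center_equiv_rootsOfUnity' (⟨0, hm⟩ : Fin m)).symm.toEquiv


end Helpers

/-- For `m` odd and positive and `k` algebraically closed of characteristic 0, every finite
2-subgroup `G` of `PGL_m(k)` lifts to `SL_m(k)`: there is a subgroup `G'` of `SL_m(k)`
mapping isomorphically (bijectively, via the canonical homomorphism) onto `G`. -/
theorem finite_two_subgroup_PGL_lifts_to_SL_of_odd
    (k : Type*) [Field k] [IsAlgClosed k] [CharZero k]
    (m : ℕ) (hm : 0 < m) (hodd : Odd m)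
    (G : Subgroup (PGL m k)) (h2 : ∃ t : ℕ, Nat.card G = 2 ^ t) :
    ∃ G' : Subgroup (Matrix.SpecialLinearGroup (Fin m) k),
      Subgroup.map (SLtoPGL m k) G' = G ∧
      ∀ x ∈ G', ∀ y ∈ G', SLtoPGL m k x = SLtoPGL m k y → x = y := by
  classical
  obtain ⟨t, ht⟩ := h2
  set H := G.comap (SLtoPGL m k) with hH
  set ψ : H →* PGL m k := (SLtoPGL m k).comp H.subtype with hψ
  set N := ψ.ker with hN
  have hle : (SLtoPGL m k).ker ≤ H := by
    intro x hx
    rw [MonoidHom.mem_ker] at hx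
    rw [hH, Subgroup.mem_comap, hx]
    exact G.one_mem
  have hψker : ∀ n : H, n ∈ N ↔ (n : Matrix.SpecialLinearGroup (Fin m) k) ∈ (SLtoPGL m k).ker := by
    intro n
    rw [hN, MonoidHom.mem_ker, MonoidHom.mem_ker, hψ, MonoidHom.comp_apply]
    rfl
  -- N is finite
  haveI hkfin := SLtoPGL_ker_finite k m hm
  haveI hNfin : Finite N := by
    refine Finite.of_injective
      (fun n : N => (⟨(n : H), (hψker (n : H)).mp n.2⟩ : (SLtoPGL m k).ker)) ?_
    intro a b hab
    simp only [Subtype.mk.injEq] at hab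
    exact Subtype.ext (Subtype.ext hab)
  -- every element of N has order dividing m
  have hNpow : ∀ n : N, n ^ m = 1 := by
    intro n
    have h1 : ((n : H) : Matrix.SpecialLinearGroup (Fin m) k) ∈ (SLtoPGL m k).ker :=
      (hψker (n : H)).mp n.2
    have h2 := SLtoPGL_ker_pow k m _ h1
    refine Subtype.ext (Subtype.ext ?_)
    push_cast
    exact h2
  -- card N is odd
  have hNodd : Odd (Nat.card N) := by
    by_contra hcon
    rw [Nat.not_odd_iff_even] at hcon
    haveI : Fact (Nat.Prime 2) := ⟨Nat.prime_two⟩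
    obtain ⟨g, hg⟩ := exists_prime_orderOf_dvd_card' (G := N) 2 hcon.two_dvd
    have hdvd : orderOf g ∣ m := orderOf_dvd_of_pow_eq_one (hNpow g)
    rw [hg] at hdvd
    exact (Nat.not_even_iff_odd.mpr hodd) ((even_iff_two_dvd).mpr hdvd)
  -- range of ψ is G
  have hr : ψ.range = G := by
    rw [hψ, MonoidHom.range_comp, Subgroup.range_subtype, hH, Subgroup.map_comap_eq,
      MonoidHom.range_eq_top.mpr (SLtoPGL_surjective k m hm), top_inf_eq]
  -- index of N is 2^t
  haveI : N.Normal := ψ.normal_ker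
  have hidx : N.index = 2 ^ t := by
    rw [hN, Subgroup.index, Nat.card_congr (QuotientGroup.quotientKerEquivRange ψ).toEquiv, hr]
    exact ht
  have hcop : Nat.Coprime (Nat.card N) N.index := by
    rw [hidx]
    refine Nat.Coprime.pow_right t ?_
    exact Nat.Coprime.symm ((Nat.prime_two.coprime_iff_not_dvd).mpr
      (by rw [← even_iff_two_dvd]; exact Nat.not_even_iff_odd.mpr hNodd))
  obtain ⟨C, hC⟩ := Subgroup.exists_right_complement'_of_coprime hcop
  refine ⟨C.map H.subtype, ?_, ?_⟩
  · rw [Subgroup.map_map]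
    have heq : (SLtoPGL m k).comp H.subtype = ψ := rfl
    rw [heq]
    apply le_antisymm
    · rintro _ ⟨c, hc', rfl⟩
      have : ψ c ∈ ψ.range := ⟨c, rfl⟩
      rwa [hr] at this
    · intro g hg
      rw [← hr] at hg
      obtain ⟨h, hh⟩ := hg
      obtain ⟨⟨n, c⟩, hnc, -⟩ := hC.existsUnique h
      refine ⟨(c : H), c.2, ?_⟩
      have hn1 : ψ (n : H) = 1 := n.2
      calc ψ (c : H) = ψ ((n : H) * (c : H)) := by rw [_root_.map_mul, hn1, one_mul]
        _ = ψ h := by rw [hnc]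
        _ = g := hh
  · intro x hx y hy hxy
    obtain ⟨cx, hcx, rfl⟩ := hx
    obtain ⟨cy, hcy, rfl⟩ := hy
    have h1 : cx * cy⁻¹ ∈ N := by
      rw [hN, MonoidHom.mem_ker, _root_.map_mul, _root_.map_inv]
      have hxy' : ψ cx = ψ cy := hxy
      rw [hxy', mul_inv_cancel]
    have h2 : cx * cy⁻¹ ∈ C := mul_mem hcx (inv_mem hcy)
    have h3 : cx * cy⁻¹ = 1 := Subgroup.disjoint_def.mp hC.disjoint h1 h2
    have h4 : cx = cy := by
      rw [← mul_inv_eq_one]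
      exact h3
    rw [h4]
end

section
/- Let k be an algebraically closed field of characteristic 0. Every elementary abelian 2-subgroup G of the quotient of the orthogonal group O_5(k) = { M ∈ GL_5(k) : Mᵀ M = I } by its center satisfies r(G) ≤ 4; equivalently, |G| ≤ 2^4 = 16. (This is the automorphism group of a smooth quadric hypersurface in projective 4-space.) -/
set_option maxRecDepth 8000


open Matrix

attribute [local instance] starRingOfComm

/-- The orthogonal group `O_5(k) = { M ∈ GL_5(k) : Mᵀ M = 1 }`
(`Matrix.orthogonalGroup` is the submonoid of matrices with `star A * A = 1`,
where `star` is transposition for a commutative ring). -/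
abbrev O5 (k : Type*) [Field k] : Type _ := Matrix.orthogonalGroup (Fin 5) k

/-- The projective orthogonal group `PO_5(k) = O_5(k)/Z(O_5(k))`, the automorphism group
of a smooth quadric threefold in `ℙ⁴`. -/
abbrev PO5 (k : Type*) [Field k] : Type _ := O5 k ⧸ Subgroup.center (O5 k)

section Aux

open Module Function

universe u v w

/-- A group of pairwise commuting involutions acting faithfully on a finite-dimensional
vector space over a field of characteristic zero has order at most `2 ^ dim`. -/
lemma involutions_card_le (k : Type u) [Field k] [CharZero k] (n : ℕ) :
    ∀ (V : Type v) [AddCommGroup V] [Module k V] [FiniteDimensional k V],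
      Module.finrank k V = n →
      ∀ (H : Type w) [Group H] (τ : H →* Module.End k V),
        Function.Injective τ →
        (∀ a b : H, a * b = b * a) →
        (∀ a : H, a * a = 1) →
        Finite H ∧ Nat.card H ≤ 2 ^ n := by
  induction n using Nat.strong_induction_on with
  | _ n IH =>
    intro V _ _ _ hV H _ τ hinj hcomm hsq
    classical
    by_cases hscal : ∀ a : H, τ a = 1 ∨ τ a = -1
    · -- all elements act as ±1
      have hf : Function.Injective (fun a : H => decide (τ a = 1)) := by
        intro a b hab
        have hiff : (τ a = 1) ↔ (τ b = 1) := decide_eq_decide.mp hab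
        rcases hscal a with ha | ha
        · exact hinj (ha.trans (hiff.mp ha).symm)
        · rcases hscal b with hb | hb
          · exact hinj ((hiff.mpr hb).trans hb.symm)
          · exact hinj (ha.trans hb.symm)
      have hfin : Finite H := Finite.of_injective _ hf
      refine ⟨hfin, ?_⟩
      have h2 : Nat.card H ≤ Nat.card Bool := Nat.card_le_card_of_injective _ hf
      have hb : Nat.card Bool = 2 := by simp [Nat.card_eq_fintype_card]
      rcases Nat.eq_zero_or_pos n with hn | hn
      · subst hn
        have : Subsingleton V := by
          rw [← Module.finrank_zero_iff (R := k)]; exact hV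
        have : Subsingleton (Module.End k V) := by
          constructor; intro f g; ext x; exact Subsingleton.elim _ _
        have hH : Subsingleton H := ⟨fun a b => hinj (Subsingleton.elim _ _)⟩
        simpa using
          (le_of_eq (Nat.card_eq_one_iff_unique.mpr ⟨hH, ⟨1⟩⟩)).trans (by norm_num)
      · calc Nat.card H ≤ 2 := by rw [← hb]; exact h2
          _ ≤ 2 ^ n := by
            calc (2:ℕ) = 2 ^ 1 := (pow_one 2).symm
              _ ≤ 2 ^ n := Nat.pow_le_pow_right (by norm_num) hn
    · push_neg at hscal
      obtain ⟨a₀, ha1, ham1⟩ := hscal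
      set f : Module.End k V := τ a₀ with hfdef
      have hff : f * f = 1 := by rw [hfdef, ← _root_.map_mul, hsq, _root_.map_one]
      have hffx : ∀ x : V, f (f x) = x := by
        intro x
        have := congrArg (fun g : Module.End k V => g x) hff
        simpa [Module.End.mul_apply] using this
      have h2k : (2 : k) ≠ 0 := two_ne_zero
      set p : Submodule k V := LinearMap.ker (f - 1) with hpdef
      set q : Submodule k V := LinearMap.ker (f + 1) with hqdef
      have hmem_p : ∀ x, x ∈ p ↔ f x = x := by
        intro x
        simp [hpdef, LinearMap.mem_ker, LinearMap.sub_apply, sub_eq_zero]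
      have hmem_q : ∀ x, x ∈ q ↔ f x = -x := by
        intro x
        simp [hqdef, LinearMap.mem_ker, LinearMap.add_apply, add_eq_zero_iff_eq_neg]
      -- commuting
      have hcommf : ∀ a : H, ∀ x : V, f (τ a x) = τ a (f x) := by
        intro a x
        have : f * τ a = τ a * f := by
          rw [hfdef, ← _root_.map_mul, ← _root_.map_mul, hcomm]
        have := congrArg (fun g : Module.End k V => g x) this
        simpa [Module.End.mul_apply] using this
      have hinv_p : ∀ a : H, ∀ x ∈ p, τ a x ∈ p := by
        intro a x hx
        rw [hmem_p] at hx ⊢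
        rw [hcommf, hx]
      have hinv_q : ∀ a : H, ∀ x ∈ q, τ a x ∈ q := by
        intro a x hx
        rw [hmem_q] at hx ⊢
        rw [hcommf, hx, _root_.map_neg]
      have hsup : p ⊔ q = ⊤ := by
        rw [eq_top_iff]
        intro x _
        have hx : x = (2⁻¹ : k) • (x + f x) + (2⁻¹ : k) • (x - f x) := by
          rw [← smul_add]
          have : x + f x + (x - f x) = (2 : k) • x := by
            rw [two_smul]; abel
          rw [this, smul_smul, inv_mul_cancel₀ h2k, one_smul]
        rw [hx]
        refine Submodule.add_mem_sup ?_ ?_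
        · rw [Submodule.smul_mem_iff _ (inv_ne_zero h2k), hmem_p, _root_.map_add, hffx]
          abel
        · rw [Submodule.smul_mem_iff _ (inv_ne_zero h2k), hmem_q, _root_.map_sub, hffx]
          abel
      have hinf : p ⊓ q = ⊥ := by
        rw [eq_bot_iff]
        intro x hx
        obtain ⟨hx1, hx2⟩ := Submodule.mem_inf.mp hx
        rw [Submodule.mem_bot]
        rw [hmem_p] at hx1
        rw [hmem_q] at hx2
        have : (2 : k) • x = 0 := by
          rw [two_smul]
          nth_rewrite 1 [← hx1]
          rw [hx2]; abel
        simpa [h2k] using this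
      have hdim : finrank k p + finrank k q = n := by
        have := Submodule.finrank_sup_add_finrank_inf_eq p q
        rw [hsup, hinf] at this
        simp only [finrank_top, finrank_bot] at this
        omega
      have hppos : finrank k p ≠ 0 := by
        rw [Ne, Submodule.finrank_eq_zero]
        intro hbot
        apply ham1
        ext x
        have hx : (2⁻¹ : k) • (x + f x) ∈ p := by
          rw [Submodule.smul_mem_iff _ (inv_ne_zero h2k), hmem_p, _root_.map_add, hffx]
          abel
        rw [hbot, Submodule.mem_bot] at hx
        have : x + f x = 0 := by
          have := congrArg (fun y => (2 : k) • y) hx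
          simpa [smul_smul, mul_inv_cancel₀ h2k] using this
        have hfx : -x = f x := add_eq_zero_iff_neg_eq.mp this
        simpa using hfx.symm
      have hqpos : finrank k q ≠ 0 := by
        rw [Ne, Submodule.finrank_eq_zero]
        intro hbot
        apply ha1
        ext x
        have hx : (2⁻¹ : k) • (x - f x) ∈ q := by
          rw [Submodule.smul_mem_iff _ (inv_ne_zero h2k), hmem_q, _root_.map_sub, hffx]
          abel
        rw [hbot, Submodule.mem_bot] at hx
        have : x - f x = 0 := by
          have := congrArg (fun y => (2 : k) • y) hx
          simpa [smul_smul, mul_inv_cancel₀ h2k] using this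
        have hfx : x = f x := sub_eq_zero.mp this
        simpa using hfx.symm
      -- restriction monoid homs
      have mk_res : ∀ (W : Submodule k V) (hW : ∀ a : H, ∀ x ∈ W, τ a x ∈ W),
          ∃ ρ : H →* Module.End k W, ∀ (a : H) (x : W), ((ρ a x : W) : V) = τ a x := by
        intro W hW
        refine ⟨{ toFun := fun a => (τ a).restrict (hW a)
                  map_one' := ?_
                  map_mul' := ?_ }, fun a x => rfl⟩
        · ext x
          simp [LinearMap.restrict_apply]
        · intro a b
          ext x
          simp [LinearMap.restrict_apply, Module.End.mul_apply]
      obtain ⟨ρp, hρp⟩ := mk_res p hinv_p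
      obtain ⟨ρq, hρq⟩ := mk_res q hinv_q
      -- quotients
      set Kp := MonoidHom.ker ρp.toHomUnits with hKp
      set Kq := MonoidHom.ker ρq.toHomUnits with hKq
      have hKerp : ∀ c : H, c ∈ Kp ↔ ρp c = 1 := by
        intro c
        rw [hKp, MonoidHom.mem_ker, Units.ext_iff]
        simp [MonoidHom.coe_toHomUnits]
      have hKerq : ∀ c : H, c ∈ Kq ↔ ρq c = 1 := by
        intro c
        rw [hKq, MonoidHom.mem_ker, Units.ext_iff]
        simp [MonoidHom.coe_toHomUnits]
      have quot_facts : ∀ (W : Submodule k V) (ρ : H →* Module.End k W)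
          (_ : ∀ (a : H) (x : W), ((ρ a x : W) : V) = τ a x),
          finrank k W < n →
          Finite (H ⧸ MonoidHom.ker ρ.toHomUnits) ∧
            Nat.card (H ⧸ MonoidHom.ker ρ.toHomUnits) ≤ 2 ^ finrank k W := by
        intro W ρ hρ hlt
        refine IH _ hlt W rfl _ ((Units.coeHom _).comp (QuotientGroup.kerLift ρ.toHomUnits))
          ?_ ?_ ?_
        · exact fun x y hxy => QuotientGroup.kerLift_injective _ (Units.ext hxy)
        · intro a b
          obtain ⟨a, rfl⟩ := QuotientGroup.mk'_surjective _ a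
          obtain ⟨b, rfl⟩ := QuotientGroup.mk'_surjective _ b
          rw [← _root_.map_mul, ← _root_.map_mul, hcomm]
        · intro a
          obtain ⟨a, rfl⟩ := QuotientGroup.mk'_surjective _ a
          rw [← _root_.map_mul, hsq, _root_.map_one]
      have hplt : finrank k p < n := by omega
      have hqlt : finrank k q < n := by omega
      obtain ⟨finp, cardp⟩ := quot_facts p ρp hρp hplt
      obtain ⟨finq, cardq⟩ := quot_facts q ρq hρq hqlt
      set Φ : H → (H ⧸ Kp) × (H ⧸ Kq) :=
        fun a => (QuotientGroup.mk a, QuotientGroup.mk a) with hΦdef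
      have hΦ : Function.Injective Φ := by
        intro a b hab
        have h1 : (QuotientGroup.mk a : H ⧸ Kp) = QuotientGroup.mk b := congrArg Prod.fst hab
        have h2 : (QuotientGroup.mk a : H ⧸ Kq) = QuotientGroup.mk b := congrArg Prod.snd hab
        rw [QuotientGroup.eq] at h1 h2
        set c := a⁻¹ * b with hc
        have hcp : ρp c = 1 := (hKerp c).mp h1
        have hcq : ρq c = 1 := (hKerq c).mp h2
        have hτc : τ c = 1 := by
          ext x
          have hx : x ∈ p ⊔ q := hsup ▸ Submodule.mem_top
          obtain ⟨y, hy, z, hz, rfl⟩ := Submodule.mem_sup.mp hx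
          have hyy : τ c y = y := by
            have := hρp c ⟨y, hy⟩
            rw [hcp] at this
            simpa using this.symm
          have hzz : τ c z = z := by
            have := hρq c ⟨z, hz⟩
            rw [hcq] at this
            simpa using this.symm
          simp [_root_.map_add, hyy, hzz]
        have : c = 1 := hinj (by rw [hτc, _root_.map_one])
        exact inv_mul_eq_one.mp this
      have hfinH : Finite H := Finite.of_injective Φ hΦ
      refine ⟨hfinH, ?_⟩
      calc Nat.card H ≤ Nat.card ((H ⧸ Kp) × (H ⧸ Kq)) :=
            Nat.card_le_card_of_injective Φ hΦ
        _ = Nat.card (H ⧸ Kp) * Nat.card (H ⧸ Kq) := Nat.card_prod _ _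
        _ ≤ 2 ^ finrank k p * 2 ^ finrank k q := Nat.mul_le_mul cardp cardq
        _ = 2 ^ n := by rw [← pow_add, hdim]

variable {k : Type*} [Field k] [CharZero k]

lemma star_mat_eq (M : Matrix (Fin 5) (Fin 5) k) : star M = Mᵀ := rfl

lemma one_ne_negone : (1 : Matrix (Fin 5) (Fin 5) k) ≠ -1 := by
  intro h
  have := congrFun (congrFun h 0) 0
  simp [Matrix.one_apply, Matrix.neg_apply] at this
  exact one_ne_zero (self_eq_neg.mp this)

lemma neg_one_mem_O5 : (-1 : Matrix (Fin 5) (Fin 5) k) ∈ Matrix.orthogonalGroup (Fin 5) k := by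
  rw [Matrix.mem_unitaryGroup_iff']
  rw [star_mat_eq]
  simp

/-- Every element of the center of `O₅(k)` is `±1`. -/
lemma center_O5 (z : O5 k) (hz : z ∈ Subgroup.center (O5 k)) :
    (z : Matrix (Fin 5) (Fin 5) k) = 1 ∨ (z : Matrix (Fin 5) (Fin 5) k) = -1 := by
  have hcen := Subgroup.mem_center_iff.mp hz
  set Z : Matrix (Fin 5) (Fin 5) k := (z : Matrix (Fin 5) (Fin 5) k) with hZ
  have h2k : (2 : k) ≠ 0 := two_ne_zero
  -- off-diagonal entries vanish
  have hoff : ∀ a b : Fin 5, a ≠ b → Z a b = 0 := by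
    intro a b hab
    set d : Fin 5 → k := fun j => if j = a then -1 else 1 with hd
    have hDmem : Matrix.diagonal d ∈ Matrix.orthogonalGroup (Fin 5) k := by
      rw [Matrix.mem_unitaryGroup_iff', star_mat_eq, Matrix.diagonal_transpose,
        Matrix.diagonal_mul_diagonal]
      have hdd : (fun j => d j * d j) = fun _ => (1 : k) := by
        funext j
        by_cases h : j = a <;> simp [hd, h]
      rw [hdd, Matrix.diagonal_one]
    have hcomm := hcen ⟨Matrix.diagonal d, hDmem⟩
    have hmat : Matrix.diagonal d * Z = Z * Matrix.diagonal d := by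
      have := congrArg (Subtype.val) hcomm
      simpa using this
    have hentry := congrFun (congrFun hmat a) b
    rw [Matrix.diagonal_mul, Matrix.mul_diagonal] at hentry
    have hda : d a = -1 := by simp [hd]
    have hdb : d b = 1 := by simp [hd, (Ne.symm hab)]
    rw [hda, hdb] at hentry
    have : (2 : k) * Z a b = 0 := by ring_nf; linear_combination -hentry
    exact (mul_eq_zero.mp this).resolve_left h2k
  -- diagonal entries are all equal
  have hdiageq : ∀ a b : Fin 5, Z a a = Z b b := by
    intro a b
    rcases eq_or_ne a b with rfl | hab
    · rfl
    set σ : Equiv.Perm (Fin 5) := Equiv.swap a b with hσ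
    have hPmem : (σ.permMatrix k) ∈ Matrix.orthogonalGroup (Fin 5) k := by
      rw [Matrix.mem_unitaryGroup_iff, star_mat_eq]
      rw [← PEquiv.toMatrix_symm, ← Equiv.toPEquiv_symm, ← PEquiv.toMatrix_trans,
        ← Equiv.toPEquiv_trans]
      simp
    have hcomm := hcen ⟨σ.permMatrix k, hPmem⟩
    have hmat : σ.permMatrix k * Z = Z * σ.permMatrix k := by
      have := congrArg (Subtype.val) hcomm
      simpa using this
    rw [PEquiv.toMatrix_toPEquiv_mul, PEquiv.mul_toMatrix_toPEquiv] at hmat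
    have hentry := congrFun (congrFun hmat a) b
    simp only [Matrix.submatrix_apply, id_eq] at hentry
    rw [hσ] at hentry
    rw [Equiv.swap_apply_left] at hentry
    have hsymm : (Equiv.swap a b).symm b = a := by
      rw [Equiv.symm_swap, Equiv.swap_apply_right]
    rw [hsymm] at hentry
    exact hentry.symm
  -- so Z is a scalar matrix
  set c : k := Z 0 0 with hc
  have hZc : Z = c • (1 : Matrix (Fin 5) (Fin 5) k) := by
    ext a b
    rcases eq_or_ne a b with rfl | hab
    · rw [Matrix.smul_apply, Matrix.one_apply_eq, smul_eq_mul, mul_one, hc]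
      exact hdiageq a 0
    · rw [hoff a b hab, Matrix.smul_apply, Matrix.one_apply_ne hab, smul_eq_mul, mul_zero]
  -- c² = 1
  have hortho : star Z * Z = 1 := z.2.1
  rw [hZc] at hortho
  have hstar1 : star (c • (1 : Matrix (Fin 5) (Fin 5) k)) = c • 1 := by
    rw [star_mat_eq, Matrix.transpose_smul, Matrix.transpose_one]
  rw [hstar1, smul_mul_smul_comm, one_mul] at hortho
  have hcc : c * c = 1 := by
    have := congrFun (congrFun hortho 0) 0
    simpa [Matrix.smul_apply, Matrix.one_apply] using this
  rcases mul_self_eq_one_iff.mp hcc with h1 | h1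
  · left; rw [hZc, h1, one_smul]
  · right; rw [hZc, h1, neg_smul, one_smul]

end Aux

/-- Every elementary abelian 2-subgroup `G ≅ (ℤ/2ℤ)^r` of `O_5(k)/Z(O_5(k))`
(`k` algebraically closed of characteristic 0) satisfies `r ≤ 4`, equivalently
`|G| ≤ 2^4 = 16`. -/
theorem rank_le_four_of_elementary_abelian_two_subgroup_PO5
    (k : Type*) [Field k] [IsAlgClosed k] [CharZero k]
    (G : Subgroup (PO5 k)) (r : ℕ)
    (h : Nonempty (G ≃* (Fin r → Multiplicative (ZMod 2)))) :
    r ≤ 4 ∧ Nat.card G ≤ 16 := by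
  obtain ⟨e⟩ := h
  classical
  -- G is elementary abelian of exponent 2
  have hG2 : ∀ g : G, g * g = 1 := by
    intro g
    apply e.injective
    rw [_root_.map_mul, _root_.map_one]
    have : ∀ y : Multiplicative (ZMod 2), y * y = 1 := by decide
    funext i
    exact this (e g i)
  have hGcomm : ∀ g h : G, g * h = h * g := by
    intro g h
    apply e.injective
    rw [_root_.map_mul, _root_.map_mul, mul_comm]
  set π : O5 k →* PO5 k := QuotientGroup.mk' (Subgroup.center (O5 k)) with hπdef
  -- determinant facts
  have hdet2 : ∀ x : O5 k, (x : Matrix (Fin 5) (Fin 5) k).det *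
      (x : Matrix (Fin 5) (Fin 5) k).det = 1 := by
    intro x
    have hx := x.2.1
    have := congrArg Matrix.det hx
    rwa [star_mat_eq, Matrix.det_mul, Matrix.det_transpose, Matrix.det_one] at this
  have hdetneg : Matrix.det (-1 : Matrix (Fin 5) (Fin 5) k) = -1 := by
    have : (-1 : Matrix (Fin 5) (Fin 5) k) = -(1 : Matrix (Fin 5) (Fin 5) k) := rfl
    rw [this, Matrix.det_neg, Matrix.det_one, Fintype.card_fin]
    norm_num
  have hker : ∀ x : O5 k, π x = 1 →
      (x : Matrix (Fin 5) (Fin 5) k) = 1 ∨ (x : Matrix (Fin 5) (Fin 5) k) = -1 := by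
    intro x hx
    apply center_O5
    have hmem : x ∈ π.ker := MonoidHom.mem_ker.mpr hx
    rwa [hπdef, QuotientGroup.ker_mk'] at hmem
  set H : Subgroup (O5 k) := Subgroup.comap π G with hHdef
  -- every element of H is an involution
  have hsqH : ∀ a : H, a * a = 1 := by
    intro a
    have hmem : π (a : O5 k) ∈ G := a.2
    have hππ : π ((a : O5 k) * (a : O5 k)) = 1 := by
      rw [_root_.map_mul]
      exact congrArg Subtype.val (hG2 ⟨π (a : O5 k), hmem⟩)
    rcases hker _ hππ with h1 | h1
    · exact Subtype.ext (Subtype.ext h1)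
    · exfalso
      have hd := congrArg Matrix.det h1
      simp only [Matrix.UnitaryGroup.mul_val] at hd
      rw [Matrix.det_mul, hdetneg, hdet2] at hd
      exact (by norm_num : (1 : k) ≠ -1) hd
  -- H is commutative
  have hcommH : ∀ a b : H, a * b = b * a := by
    intro a b
    set x : O5 k := (a : O5 k) with hxv
    set y : O5 k := (b : O5 k) with hyv
    have hπc : π ((y * x)⁻¹ * (x * y)) = 1 := by
      have hx : π x ∈ G := a.2
      have hy : π y ∈ G := b.2
      have hcval : π x * π y = π y * π x :=
        congrArg Subtype.val (hGcomm ⟨π x, hx⟩ ⟨π y, hy⟩)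
      rw [_root_.map_mul, _root_.map_inv, _root_.map_mul, _root_.map_mul, hcval, inv_mul_cancel]
    rcases hker _ hπc with h1 | h1
    · have h1' : (y * x)⁻¹ * (x * y) = 1 := Subtype.ext h1
      have : x * y = y * x := by
        have := inv_mul_eq_one.mp h1'
        exact this.symm
      exact Subtype.ext this
    · exfalso
      have hgrp : x * y = (y * x) * ((y * x)⁻¹ * (x * y)) := by group
      have hmat : ((x * y : O5 k) : Matrix (Fin 5) (Fin 5) k) =
          ((y * x : O5 k) : Matrix (Fin 5) (Fin 5) k) * (-1) := by
        rw [hgrp]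
        have : (((y * x) * ((y * x)⁻¹ * (x * y)) : O5 k) : Matrix (Fin 5) (Fin 5) k) =
            ((y * x : O5 k) : Matrix (Fin 5) (Fin 5) k) *
              (((y * x)⁻¹ * (x * y) : O5 k) : Matrix (Fin 5) (Fin 5) k) := rfl
        rw [this, h1]
      have hd := congrArg Matrix.det hmat
      simp only [Matrix.UnitaryGroup.mul_val] at hd
      rw [Matrix.det_mul, Matrix.det_mul, Matrix.det_mul, hdetneg] at hd
      set u : k := (x : Matrix (Fin 5) (Fin 5) k).det * (y : Matrix (Fin 5) (Fin 5) k).det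
        with hu
      have hu2 : (2 : k) * u = 0 := by
        rw [hu]
        linear_combination hd
      have hu0 : u = 0 := (mul_eq_zero.mp hu2).resolve_left two_ne_zero
      have huu : u * u = 1 := by
        rw [hu]
        have h1 := hdet2 x
        have h2 := hdet2 y
        linear_combination ((y : Matrix (Fin 5) (Fin 5) k).det *
          (y : Matrix (Fin 5) (Fin 5) k).det) * h1 + h2
      rw [hu0, mul_zero] at huu
      exact zero_ne_one huu
  -- the faithful representation of H on k⁵
  set τ : H →* Module.End k (Fin 5 → k) :=
    { toFun := fun a => Matrix.toLinAlgEquiv' ((a : O5 k) : Matrix (Fin 5) (Fin 5) k)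
      map_one' := by simp
      map_mul' := by intros; simp } with hτdef
  have hinjτ : Function.Injective τ := by
    intro a b hab
    apply Subtype.ext
    apply Subtype.ext
    exact Matrix.toLinAlgEquiv'.injective hab
  obtain ⟨hfinH, hcardH⟩ :=
    involutions_card_le k 5 (Fin 5 → k) (by simp) H τ hinjτ hcommH hsqH
  -- the element -1 of O5
  set m1 : O5 k := ⟨-1, neg_one_mem_O5⟩ with hm1def
  have hm1center : m1 ∈ Subgroup.center (O5 k) := by
    rw [Subgroup.mem_center_iff]
    intro g
    apply Subtype.ext
    show (g : Matrix (Fin 5) (Fin 5) k) * (-1) = (-1) * (g : Matrix (Fin 5) (Fin 5) k)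
    rw [mul_neg_one, neg_one_mul]
  have hπm1 : π m1 = 1 := by
    have : m1 ∈ π.ker := by
      rw [hπdef, QuotientGroup.ker_mk']
      exact hm1center
    exact MonoidHom.mem_ker.mp this
  have hm1ne1 : m1 ≠ 1 := by
    intro hcon
    exact one_ne_negone (k := k) (congrArg Subtype.val hcon).symm
  have hm1H : m1 ∈ H := by
    rw [hHdef, Subgroup.mem_comap, hπm1]
    exact one_mem G
  -- section of π over G
  have hsurj : Function.Surjective π := QuotientGroup.mk'_surjective _
  choose s hs using fun g : G => hsurj (g : PO5 k)
  have hsH : ∀ g : G, s g ∈ H := by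
    intro g
    rw [hHdef, Subgroup.mem_comap, hs g]
    exact g.2
  -- injection G × Bool → H
  set Φ : G × Bool → H := fun gb =>
    if gb.2 then ⟨s gb.1, hsH gb.1⟩ else ⟨m1 * s gb.1, mul_mem hm1H (hsH gb.1)⟩ with hΦdef
  have hΦinj : Function.Injective Φ := by
    rintro ⟨g, b⟩ ⟨g', b'⟩ hEq
    have hval : ((Φ (g, b) : O5 k)) = ((Φ (g', b') : O5 k)) := congrArg Subtype.val hEq
    cases b <;> cases b' <;> simp only [hΦdef, if_true, if_false, Bool.false_eq_true] at hval
    · -- both false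
      have hss : s g = s g' := mul_left_cancel hval
      have : (g : PO5 k) = (g' : PO5 k) := by rw [← hs g, ← hs g', hss]
      rw [Subtype.ext this]
    · -- false, true : m1 * s g = s g'
      exfalso
      have hπe : (g : PO5 k) = (g' : PO5 k) := by
        rw [← hs g, ← hs g', ← hval, _root_.map_mul, hπm1, one_mul]
      have hgg : g = g' := Subtype.ext hπe
      rw [← hgg] at hval
      have : m1 = 1 := by
        have := hval
        nth_rewrite 2 [← one_mul (s g)] at this
        exact mul_right_cancel this
      exact hm1ne1 this
    · -- true, false
      exfalso
      have hπe : (g : PO5 k) = (g' : PO5 k) := by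
        rw [← hs g, ← hs g', hval, _root_.map_mul, hπm1, one_mul]
      have hgg : g = g' := Subtype.ext hπe
      rw [← hgg] at hval
      have : m1 = 1 := by
        have := hval.symm
        nth_rewrite 2 [← one_mul (s g)] at this
        exact mul_right_cancel this
      exact hm1ne1 this
    · -- both true
      have : (g : PO5 k) = (g' : PO5 k) := by rw [← hs g, ← hs g', hval]
      rw [Subtype.ext this]
  have hcard2 : Nat.card (G × Bool) ≤ Nat.card H :=
    Nat.card_le_card_of_injective Φ hΦinj
  have hcardprod : Nat.card (G × Bool) = Nat.card G * 2 := by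
    rw [Nat.card_prod]
    simp [Nat.card_eq_fintype_card]
  have hcardG : Nat.card G = 2 ^ r := by
    rw [Nat.card_congr e.toEquiv]
    simp [Nat.card_eq_fintype_card]
  have hfinal : 2 ^ (r + 1) ≤ 2 ^ 5 := by
    calc 2 ^ (r + 1) = 2 ^ r * 2 := by rw [pow_succ]
      _ = Nat.card (G × Bool) := by rw [hcardprod, hcardG]
      _ ≤ Nat.card H := hcard2
      _ ≤ 2 ^ 5 := hcardH
  have hr : r + 1 ≤ 5 := (Nat.pow_le_pow_iff_right (by norm_num)).mp hfinal
  constructor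
  · omega
  · rw [hcardG]
    calc (2 : ℕ) ^ r ≤ 2 ^ 4 := Nat.pow_le_pow_right (by norm_num) (by omega)
      _ = 16 := by norm_num
end
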